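/- arXiv:1608.08576 — 2 statements merged into one kernel-verified Lean document; each statement's English description precedes it below -/
import Mathlib

section
/- (Nemirovski lemma, 'if' direction) Given matrices A = A^H, B, C of conformable dimensions and κ ≥ 0, if there exists β ≥ 0 such that [[A − β C^H C, −κ B^H],[−κ B, β I]] ⪰ 0, then A ⪰ B^H X C + C^H X^H B for all X with operator norm ‖X‖ ≤ κ. -/
open scoped Matrix ComplexOrder Matrix.Norms.L2Operator

lemma nemirovski_aux_smul {n : Type*} [Fintype n] {M : Matrix n n ℂ}
    (hM : M.PosSemidef) {r : ℝ} (hr : 0 ≤ r) : ((r : ℂ) • M).PosSemidef := by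
  rw [Matrix.posSemidef_iff_dotProduct_mulVec]
  constructor
  · rw [Matrix.IsHermitian, Matrix.conjTranspose_smul, hM.1.eq]
    congr 1
    simp [Complex.star_def]
  · intro v
    rw [Matrix.smul_mulVec, dotProduct_smul, smul_eq_mul]
    exact mul_nonneg (by exact_mod_cast hr) (hM.dotProduct_mulVec_nonneg v)

lemma nemirovski_aux_sq {m : Type*} [Fintype m] (w : m → ℂ) :
    star w ⬝ᵥ w = ((‖(EuclideanSpace.equiv m ℂ).symm w‖ ^ 2 : ℝ) : ℂ) := by
  have h1 := EuclideanSpace.inner_eq_star_dotProduct (𝕜 := ℂ)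
    ((EuclideanSpace.equiv m ℂ).symm w) ((EuclideanSpace.equiv m ℂ).symm w)
  have h2 := inner_self_eq_norm_sq_to_K (𝕜 := ℂ) ((EuclideanSpace.equiv m ℂ).symm w)
  rw [h2] at h1
  rw [show ((‖(EuclideanSpace.equiv m ℂ).symm w‖ ^ 2 : ℝ) : ℂ)
      = ((‖(EuclideanSpace.equiv m ℂ).symm w‖ : ℂ)) ^ 2 by push_cast; ring]
  rw [dotProduct_comm]
  exact h1.symm

lemma nemirovski_aux_opnorm {p q : Type*} [Fintype p] [Fintype q] [DecidableEq q]
    (X : Matrix p q ℂ) (κ : ℝ) (hX : ‖X‖ ≤ κ) :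
    (((κ : ℂ) ^ 2) • (1 : Matrix q q ℂ) - Xᴴ * X).PosSemidef := by
  have hκ : 0 ≤ κ := le_trans (norm_nonneg X) hX
  rw [Matrix.posSemidef_iff_dotProduct_mulVec]
  constructor
  · rw [Matrix.IsHermitian, Matrix.conjTranspose_sub, Matrix.conjTranspose_smul,
      Matrix.conjTranspose_mul, Matrix.conjTranspose_conjTranspose, Matrix.conjTranspose_one]
    congr 1
    congr 1
    simp [Complex.star_def]
  · intro v
    have expand : ((((κ : ℂ) ^ 2) • (1 : Matrix q q ℂ) - Xᴴ * X) *ᵥ v)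
        = ((κ : ℂ) ^ 2) • v - Xᴴ *ᵥ (X *ᵥ v) := by
      rw [Matrix.sub_mulVec, Matrix.smul_mulVec, Matrix.one_mulVec, ← Matrix.mulVec_mulVec]
    rw [expand, dotProduct_sub, dotProduct_smul]
    have hstep : star v ⬝ᵥ (Xᴴ *ᵥ (X *ᵥ v)) = star (X *ᵥ v) ⬝ᵥ (X *ᵥ v) := by
      rw [Matrix.dotProduct_mulVec, ← Matrix.star_mulVec]
    rw [hstep, nemirovski_aux_sq v, nemirovski_aux_sq (X *ᵥ v), smul_eq_mul]
    have hnorm : ‖(EuclideanSpace.equiv p ℂ).symm (X *ᵥ v)‖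
        ≤ κ * ‖(EuclideanSpace.equiv q ℂ).symm v‖ := by
      refine le_trans (X.l2_opNorm_mulVec ((EuclideanSpace.equiv q ℂ).symm v)) ?_
      exact mul_le_mul_of_nonneg_right hX (norm_nonneg _)
    have h0 : (0:ℝ) ≤ κ ^ 2 * ‖(EuclideanSpace.equiv q ℂ).symm v‖ ^ 2
        - ‖(EuclideanSpace.equiv p ℂ).symm (X *ᵥ v)‖ ^ 2 := by
      nlinarith [norm_nonneg ((EuclideanSpace.equiv p ℂ).symm (X *ᵥ v)),
        norm_nonneg ((EuclideanSpace.equiv q ℂ).symm v)]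
    have : ((κ:ℂ)^2) * ((‖(EuclideanSpace.equiv q ℂ).symm v‖ ^ 2 : ℝ) : ℂ)
        - ((‖(EuclideanSpace.equiv p ℂ).symm (X *ᵥ v)‖ ^ 2 : ℝ) : ℂ)
        = ((κ ^ 2 * ‖(EuclideanSpace.equiv q ℂ).symm v‖ ^ 2
            - ‖(EuclideanSpace.equiv p ℂ).symm (X *ᵥ v)‖ ^ 2 : ℝ) : ℂ) := by
      push_cast; ring
    rw [this]
    exact_mod_cast h0

/-- Nemirovski lemma ('if' direction): if there exists `β ≥ 0` with
`[[A − β CᴴC, −κ Bᴴ],[−κ B, β I]] ⪰ 0`, then `A ⪰ Bᴴ X C + Cᴴ Xᴴ B` for all `X`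
with operator norm `‖X‖ ≤ κ`. -/
theorem nemirovski_if {n p q : Type*} [Fintype n] [Fintype p] [Fintype q]
    [DecidableEq p] [DecidableEq q]
    (A : Matrix n n ℂ) (hA : A.IsHermitian) (B : Matrix p n ℂ) (C : Matrix q n ℂ)
    (κ : ℝ) (hκ : 0 ≤ κ) (β : ℝ) (hβ : 0 ≤ β)
    (h : (Matrix.fromBlocks (A - (β : ℂ) • (Cᴴ * C)) (-(κ : ℂ) • Bᴴ)
        (-(κ : ℂ) • B) ((β : ℂ) • (1 : Matrix p p ℂ))).PosSemidef) :
    ∀ X : Matrix p q ℂ, ‖X‖ ≤ κ →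
      (A - (Bᴴ * X * C + Cᴴ * Xᴴ * B)).PosSemidef := by
  intro X hX
  rcases eq_or_lt_of_le hκ with hκ0 | hκpos
  · -- κ = 0 : then X = 0
    have hXz : X = 0 := by
      have : ‖X‖ ≤ 0 := by rw [hκ0]; exact hX
      exact norm_le_zero_iff.mp this
    subst hXz
    simp only [Matrix.mul_zero, Matrix.zero_mul, Matrix.conjTranspose_zero, add_zero,
      sub_zero, zero_add]
    -- A is PSD: A = (A - β CᴴC) + β CᴴC
    have h1 : (A - (β : ℂ) • (Cᴴ * C)).PosSemidef := by
      have := h.submatrix (Sum.inl : n → n ⊕ p)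
      convert this using 1
      ext i j
      simp
    have h2 : ((β : ℂ) • (Cᴴ * C)).PosSemidef :=
      nemirovski_aux_smul (Matrix.posSemidef_conjTranspose_mul_self C) hβ
    have := h1.add h2
    simpa using this
  · letI : DecidableEq n := Classical.decEq n
    set P : Matrix (n ⊕ p) n ℂ :=
      Matrix.fromRows (1 : Matrix n n ℂ) (((κ:ℂ)⁻¹) • (X * C)) with hP
    have hκc : (κ : ℂ) ≠ 0 := by
      simp only [ne_eq, Complex.ofReal_eq_zero]
      exact ne_of_gt hκpos
    have key : A - (Bᴴ * X * C + Cᴴ * Xᴴ * B)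
        = Pᴴ * (Matrix.fromBlocks (A - (β : ℂ) • (Cᴴ * C)) (-(κ : ℂ) • Bᴴ)
            (-(κ : ℂ) • B) ((β : ℂ) • (1 : Matrix p p ℂ))) * P
          + ((β : ℂ) * ((κ:ℂ)⁻¹ * (κ:ℂ)⁻¹)) •
              (Cᴴ * (((κ : ℂ) ^ 2) • (1 : Matrix q q ℂ) - Xᴴ * X) * C) := by
      rw [hP, Matrix.conjTranspose_fromRows_eq_fromCols_conjTranspose,
        Matrix.mul_assoc _ _ (Matrix.fromRows (1 : Matrix n n ℂ) (((κ:ℂ)⁻¹) • (X * C))),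
        Matrix.fromBlocks_mul_fromRows, Matrix.fromCols_mul_fromRows]
      simp only [Matrix.conjTranspose_one, Matrix.conjTranspose_smul, Matrix.conjTranspose_mul,
        Matrix.mul_one, Matrix.one_mul, Matrix.smul_mul, Matrix.mul_smul, smul_smul,
        Matrix.mul_sub, Matrix.sub_mul, Matrix.mul_add, Matrix.add_mul, Matrix.mul_assoc,
        star_inv₀, Complex.star_def, Complex.conj_ofReal]
      rw [show ((κ:ℂ)⁻¹ * (-(κ:ℂ))) = -1 by field_simp]
      rw [show (-(κ:ℂ) * (κ:ℂ)⁻¹) = -1 by field_simp]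
      rw [smul_sub, smul_smul,
        show ((β:ℂ) * ((κ:ℂ)⁻¹ * (κ:ℂ)⁻¹) * (κ:ℂ)^2) = (β:ℂ) by
          rw [show ((β:ℂ) * ((κ:ℂ)⁻¹ * (κ:ℂ)⁻¹) * (κ:ℂ)^2)
              = (β:ℂ) * (((κ:ℂ)⁻¹ * (κ:ℂ)) * ((κ:ℂ)⁻¹ * (κ:ℂ))) by ring,
            inv_mul_cancel₀ hκc]
          ring]
      match_scalars <;> ring
    rw [key]
    refine Matrix.PosSemidef.add (h.conjTranspose_mul_mul_same P) ?_
    have hinner : (((κ : ℂ) ^ 2) • (1 : Matrix q q ℂ) - Xᴴ * X).PosSemidef :=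
      nemirovski_aux_opnorm X κ hX
    have hmid := hinner.conjTranspose_mul_mul_same (B := C)
    rw [← Matrix.conjTranspose_conjTranspose C] at hmid
    have : ((β : ℂ) * ((κ:ℂ)⁻¹ * (κ:ℂ)⁻¹)) = ((β * (κ⁻¹ * κ⁻¹) : ℝ) : ℂ) := by push_cast; ring
    rw [this]
    refine nemirovski_aux_smul ?_ (by positivity)
    simpa using hmid
end

section
/- Let X be an n×n Hermitian positive definite matrix, h ∈ ℂ^n, t > 0, and Z = X − t h h^H. If Z is positive semidefinite and Z Q = 0 for a nonzero PSD matrix Q, then rank(Z) = n − 1 and rank(Q) = 1. -/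
open scoped ComplexOrder Matrix

open Matrix in
lemma aux_rank_add_le {n : Type*} [Fintype n] [DecidableEq n]
    (A B : Matrix n n ℂ) : (A + B).rank ≤ A.rank + B.rank := by
  have hrange : LinearMap.range (A + B).mulVecLin ≤
      LinearMap.range A.mulVecLin ⊔ LinearMap.range B.mulVecLin := by
    rintro x ⟨v, rfl⟩
    have : (A + B).mulVecLin v = A.mulVecLin v + B.mulVecLin v := by
      simp [Matrix.mulVecLin_apply, Matrix.add_mulVec]
    rw [this]
    exact Submodule.add_mem_sup ⟨v, rfl⟩ ⟨v, rfl⟩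
  calc (A + B).rank ≤ Module.finrank ℂ
        ↥(LinearMap.range A.mulVecLin ⊔ LinearMap.range B.mulVecLin) :=
        Submodule.finrank_mono hrange
    _ ≤ A.rank + B.rank := by
        have := Submodule.finrank_sup_add_finrank_inf_eq
          (LinearMap.range A.mulVecLin) (LinearMap.range B.mulVecLin)
        simp only [Matrix.rank]
        omega

open Matrix in
lemma aux_rank_pos {n : Type*} [Fintype n] [DecidableEq n]
    (A : Matrix n n ℂ) (hA : A ≠ 0) : 1 ≤ A.rank := by
  rw [Nat.one_le_iff_ne_zero]
  intro h0
  apply hA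
  have : LinearMap.range A.mulVecLin = ⊥ := Submodule.finrank_eq_zero.mp h0
  ext i j
  have : A.mulVecLin (Pi.single j 1) = 0 := by
    have hmem : A.mulVecLin (Pi.single j 1) ∈ LinearMap.range A.mulVecLin :=
      ⟨_, rfl⟩
    rw [this] at hmem
    simpa using hmem
  have := congrFun this i
  simpa [mulVecLin_apply, mulVec_single] using this

/-- If `X ≻ 0`, `t > 0`, `Z = X − t h hᴴ ⪰ 0` and `Z Q = 0` for a nonzero PSD `Q`,
then `rank Z = n − 1` and `rank Q = 1`. -/
theorem rank_of_rank_one_perturbation {n : Type*} [Fintype n] [DecidableEq n]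
    (X : Matrix n n ℂ) (hX : X.PosDef) (h : n → ℂ) (t : ℝ) (ht : 0 < t)
    (Z : Matrix n n ℂ) (hZdef : Z = X - (t : ℂ) • Matrix.vecMulVec h (star h))
    (hZ : Z.PosSemidef) (Q : Matrix n n ℂ) (hQ : Q.PosSemidef) (hQne : Q ≠ 0)
    (hZQ : Z * Q = 0) :
    Z.rank = Fintype.card n - 1 ∧ Q.rank = 1 := by
  set B : Matrix n n ℂ := (t : ℂ) • Matrix.vecMulVec h (star h) with hB
  have hXrank : X.rank = Fintype.card n := Matrix.rank_of_isUnit X hX.isUnit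
  -- rank of B ≤ 1
  have hBrank : B.rank ≤ 1 := by
    have : B = Matrix.replicateCol (Fin 1) ((t : ℂ) • h) * Matrix.replicateRow (Fin 1) (star h) := by
      rw [hB]
      ext i j
      simp [Matrix.vecMulVec_apply, Matrix.mul_apply, mul_assoc]
    calc B.rank ≤ (Matrix.replicateRow (Fin 1) (star h)).rank := by
          rw [this]; exact Matrix.rank_mul_le_right _ _
      _ ≤ Fintype.card (Fin 1) := Matrix.rank_le_card_height _
      _ = 1 := by simp
  -- rank X ≤ rank Z + 1
  have hXZ : X = Z + B := by rw [hZdef]; simp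
  have h1 : Fintype.card n ≤ Z.rank + 1 := by
    calc Fintype.card n = X.rank := hXrank.symm
      _ ≤ Z.rank + B.rank := by rw [hXZ]; exact aux_rank_add_le Z B
      _ ≤ Z.rank + 1 := by omega
  have h2 : Z.rank + Q.rank ≤ Fintype.card n :=
    Matrix.rank_add_rank_le_card_of_mul_eq_zero hZQ
  have h3 : 1 ≤ Q.rank := aux_rank_pos Q hQne
  omega
end
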